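/- Let u be a smooth map from S¹ × (0,T) into a Kähler manifold N with ∇J = 0, satisfying ∇_t u_x = ∇_x u_t. Then d/dt ∫_{S¹} ⟨∇_x u_x, J u_x⟩ dx = 2∫ ⟨u_t, J∇_x² u_x⟩ dx − ∫ ⟨u_t, R(u_x, Ju_x)u_x⟩ dx. -/
import Mathlib


open scoped RealInnerProductSpace
open Real

/-- An abstract model of the data attached to a smooth map `u : S¹ × ℝ → N` into a
Riemannian manifold: sections of the pullback bundle `u⁻¹TN` (with fibers identified with
a fixed inner product space `V`), covariant derivatives `Dx`, `Dt`, the curvature `R` of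
`N` along `u`, together with their standard properties (periodicity in `x`,
torsion-freeness, the commutation formula `∇ₜ∇ₓ − ∇ₓ∇ₜ = R(uₜ,uₓ)`, metric compatibility,
differentiation under the integral sign, and the curvature symmetries). -/
structure CovSystem (V : Type*) [NormedAddCommGroup V] [InnerProductSpace ℝ V] where
  Sec : Set (ℝ → ℝ → V)
  ux : ℝ → ℝ → V
  ut : ℝ → ℝ → V
  Dx : (ℝ → ℝ → V) → ℝ → ℝ → V
  Dt : (ℝ → ℝ → V) → ℝ → ℝ → V
  R : ℝ → ℝ → V → V → V → V
  mem_ux : ux ∈ Sec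
  mem_ut : ut ∈ Sec
  mem_Dx : ∀ s ∈ Sec, Dx s ∈ Sec
  mem_Dt : ∀ s ∈ Sec, Dt s ∈ Sec
  mem_R : ∀ a ∈ Sec, ∀ b ∈ Sec, ∀ c ∈ Sec,
    (fun t x => R t x (a t x) (b t x) (c t x)) ∈ Sec
  cont : ∀ s ∈ Sec, Continuous fun p : ℝ × ℝ => s p.1 p.2
  periodic : ∀ s ∈ Sec, ∀ t x, s t (x + 2 * π) = s t x
  torsion : Dt ux = Dx ut
  comm : ∀ s ∈ Sec, ∀ t x,
    Dt (Dx s) t x - Dx (Dt s) t x = R t x (ut t x) (ux t x) (s t x)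
  metric_x : ∀ s ∈ Sec, ∀ r ∈ Sec, ∀ t x,
    HasDerivAt (fun y => ⟪s t y, r t y⟫) (⟪Dx s t x, r t x⟫ + ⟪s t x, Dx r t x⟫) x
  metric_t : ∀ s ∈ Sec, ∀ r ∈ Sec, ∀ t x,
    HasDerivAt (fun τ => ⟪s τ x, r τ x⟫) (⟪Dt s t x, r t x⟫ + ⟪s t x, Dt r t x⟫) t
  dint : ∀ s ∈ Sec, ∀ r ∈ Sec, ∀ t,
    HasDerivAt (fun τ => ∫ x in (0 : ℝ)..(2 * π), ⟪s τ x, r τ x⟫)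
      (∫ x in (0 : ℝ)..(2 * π), (⟪Dt s t x, r t x⟫ + ⟪s t x, Dt r t x⟫)) t
  R_antisym : ∀ t x a b c, R t x a b c = -R t x b a c
  R_skew : ∀ t x a b c d, ⟪R t x a b c, d⟫ = -⟪R t x a b d, c⟫
  R_pair : ∀ t x a b c d, ⟪R t x a b c, d⟫ = ⟪R t x c d a, b⟫

/-- A `CovSystem` for a map into a Kähler manifold: in addition there is the complex
structure `J` along `u`, which is an almost-complex structure (`J² = −1`), skew-adjoint
with respect to the metric, and parallel (`∇J = 0`, so it commutes with `Dx` and `Dt`). -/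
structure KCovSystem (V : Type*) [NormedAddCommGroup V] [InnerProductSpace ℝ V]
    extends CovSystem V where
  J : ℝ → ℝ → V → V
  mem_J : ∀ s ∈ Sec, (fun t x => J t x (s t x)) ∈ Sec
  J_skew : ∀ t x v w, ⟪J t x v, w⟫ = -⟪v, J t x w⟫
  J_sq : ∀ t x v, J t x (J t x v) = -v
  J_par_x : ∀ s ∈ Sec, ∀ t x, Dx (fun t x => J t x (s t x)) t x = J t x (Dx s t x)
  J_par_t : ∀ s ∈ Sec, ∀ t x, Dt (fun t x => J t x (s t x)) t x = J t x (Dt s t x)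

/-- For a smooth map `u : S¹ × (0,T) → N` into a Kähler manifold with `∇J = 0`,
`d/dt ∫ ⟨∇ₓuₓ, Juₓ⟩ dx = 2∫⟨uₜ, J∇ₓ²uₓ⟩ dx − ∫⟨uₜ, R(uₓ, Juₓ)uₓ⟩ dx`. -/
theorem stmt19 {V : Type*} [NormedAddCommGroup V] [InnerProductSpace ℝ V]
    (F : KCovSystem V)
    (hRJ : ∀ t x a b c d, ⟪F.R t x a b c, F.J t x d⟫ = -⟪F.R t x a b (F.J t x c), d⟫) :
    ∀ t : ℝ,
      HasDerivAt
        (fun τ => ∫ x in (0 : ℝ)..(2 * π), ⟪F.Dx F.ux τ x, F.J τ x (F.ux τ x)⟫)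
        (2 * (∫ x in (0 : ℝ)..(2 * π), ⟪F.ut t x, F.J t x (F.Dx (F.Dx F.ux) t x)⟫)
          - ∫ x in (0 : ℝ)..(2 * π),
              ⟪F.ut t x, F.R t x (F.ux t x) (F.J t x (F.ux t x)) (F.ux t x)⟫) t := by
  intro t
  have mux := F.mem_ux
  have m_ut := F.mem_ut
  have mJux : (fun t x => F.J t x (F.ux t x)) ∈ F.Sec := F.mem_J _ mux
  have mDxux := F.mem_Dx _ mux
  have mDxut := F.mem_Dx _ m_ut
  have mDx2ut := F.mem_Dx _ mDxut
  have mDx2ux := F.mem_Dx _ mDxux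
  have mJDxux : (fun t x => F.J t x (F.Dx F.ux t x)) ∈ F.Sec := F.mem_J _ mDxux
  have mJDx2ux : (fun t x => F.J t x (F.Dx (F.Dx F.ux) t x)) ∈ F.Sec := F.mem_J _ mDx2ux
  have mRf : (fun t x => F.R t x (F.ux t x) ((fun t x => F.J t x (F.ux t x)) t x) (F.ux t x))
      ∈ F.Sec := F.mem_R _ mux _ mJux _ mux
  -- continuity in x
  have contx : ∀ s ∈ F.Sec, Continuous fun x : ℝ => s t x := fun s hs =>
    (F.cont s hs).comp (Continuous.prodMk_right t)
  have integ : ∀ s ∈ F.Sec, ∀ r ∈ F.Sec,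
      IntervalIntegrable (fun x => ⟪s t x, r t x⟫) MeasureTheory.volume 0 (2 * π) :=
    fun s hs r hr => ((contx s hs).inner (contx r hr)).intervalIntegrable _ _
  -- integration by parts
  have ibp : ∀ s ∈ F.Sec, ∀ r ∈ F.Sec,
      (∫ x in (0:ℝ)..(2*π), ⟪F.Dx s t x, r t x⟫)
        = - ∫ x in (0:ℝ)..(2*π), ⟪s t x, F.Dx r t x⟫ := by
    intro s hs r hr
    have hFTC := intervalIntegral.integral_eq_sub_of_hasDerivAt
      (a := (0:ℝ)) (b := 2*π) (f := fun y => ⟪s t y, r t y⟫)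
      (fun x _ => F.metric_x s hs r hr t x)
      ((((contx _ (F.mem_Dx s hs)).inner (contx r hr)).add
        ((contx s hs).inner (contx _ (F.mem_Dx r hr)))).intervalIntegrable _ _)
    have hp : s t (2*π) = s t 0 := by simpa using F.periodic s hs t 0
    have hp' : r t (2*π) = r t 0 := by simpa using F.periodic r hr t 0
    simp only [hp, hp', sub_self] at hFTC
    rw [intervalIntegral.integral_add (integ _ (F.mem_Dx s hs) r hr)
      (integ s hs _ (F.mem_Dx r hr))] at hFTC
    linarith
  -- abbreviations for the three integrals
  set C : ℝ := ∫ x in (0:ℝ)..(2*π), ⟪F.ut t x, F.J t x (F.Dx (F.Dx F.ux) t x)⟫ with hC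
  -- ∫⟪Dx ut, J Dx ux⟫ = -C
  have hQ : (∫ x in (0:ℝ)..(2*π), ⟪F.Dx F.ut t x, F.J t x (F.Dx F.ux t x)⟫) = -C := by
    have := ibp F.ut m_ut _ mJDxux
    rw [this, hC]
    congr 1
    apply intervalIntegral.integral_congr
    intro x _
    simp [F.J_par_x _ mDxux t x]
  -- ∫⟪Dx Dx ut, J ux⟫ = C
  have hP : (∫ x in (0:ℝ)..(2*π), ⟪F.Dx (F.Dx F.ut) t x, F.J t x (F.ux t x)⟫) = C := by
    have h1 := ibp (F.Dx F.ut) mDxut _ mJux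
    rw [h1]
    have h2 : (∫ x in (0:ℝ)..(2*π), ⟪F.Dx F.ut t x,
        F.Dx (fun t x => F.J t x (F.ux t x)) t x⟫)
        = ∫ x in (0:ℝ)..(2*π), ⟪F.Dx F.ut t x, F.J t x (F.Dx F.ux t x)⟫ := by
      apply intervalIntegral.integral_congr
      intro x _
      simp [F.J_par_x _ mux t x]
    rw [h2, hQ, neg_neg]
  -- the main derivative
  have hmain := F.dint (F.Dx F.ux) mDxux _ mJux t
  have key : (∫ x in (0:ℝ)..(2*π),
      (⟪F.Dt (F.Dx F.ux) t x, (fun t x => F.J t x (F.ux t x)) t x⟫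
        + ⟪F.Dx F.ux t x, F.Dt (fun t x => F.J t x (F.ux t x)) t x⟫))
      = 2 * C - ∫ x in (0:ℝ)..(2*π),
          ⟪F.ut t x, F.R t x (F.ux t x) (F.J t x (F.ux t x)) (F.ux t x)⟫ := by
    have hcongr : (∫ x in (0:ℝ)..(2*π),
        (⟪F.Dt (F.Dx F.ux) t x, (fun t x => F.J t x (F.ux t x)) t x⟫
          + ⟪F.Dx F.ux t x, F.Dt (fun t x => F.J t x (F.ux t x)) t x⟫))
        = ∫ x in (0:ℝ)..(2*π),
            (⟪F.Dx (F.Dx F.ut) t x, F.J t x (F.ux t x)⟫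
              - ⟪F.ut t x, F.R t x (F.ux t x) (F.J t x (F.ux t x)) (F.ux t x)⟫
              - ⟪F.Dx F.ut t x, F.J t x (F.Dx F.ux t x)⟫) := by
      apply intervalIntegral.integral_congr
      intro x _
      have hc := F.comm F.ux mux t x
      rw [F.torsion] at hc
      have hDt : F.Dt (F.Dx F.ux) t x
          = F.Dx (F.Dx F.ut) t x + F.R t x (F.ut t x) (F.ux t x) (F.ux t x) := by
        rw [← hc]; abel
      have hDtJ : F.Dt (fun t x => F.J t x (F.ux t x)) t x
          = F.J t x (F.Dx F.ut t x) := by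
        rw [F.J_par_t _ mux t x, F.torsion]
      have eR : ⟪F.R t x (F.ut t x) (F.ux t x) (F.ux t x), F.J t x (F.ux t x)⟫
          = -⟪F.ut t x, F.R t x (F.ux t x) (F.J t x (F.ux t x)) (F.ux t x)⟫ := by
        rw [F.R_pair, F.R_skew, real_inner_comm]
      have eJ : ⟪F.Dx F.ux t x, F.J t x (F.Dx F.ut t x)⟫
          = -⟪F.Dx F.ut t x, F.J t x (F.Dx F.ux t x)⟫ := by
        rw [real_inner_comm, F.J_skew]
      simp only [hDt, hDtJ, inner_add_left, eR, eJ]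
      ring
    rw [hcongr]
    rw [intervalIntegral.integral_sub
        ((integ _ mDx2ut _ mJux).sub (integ _ m_ut _ mRf))
        (integ _ mDxut _ mJDxux),
      intervalIntegral.integral_sub (integ _ mDx2ut _ mJux) (integ _ m_ut _ mRf),
      hP, hQ]
    ring
  rw [← key]
  exact hmain
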